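/- Let G be a graph on n vertices with adjacency matrix A and walk matrix W, let p be a prime and λ₀ an integer. If the rank of W over the field with p elements is n−1, then the rank of A − λ₀I over the field with p elements is at least n−2. -/

import Mathlib

open Matrix

open scoped Classical in
/-- The (0,1)-adjacency matrix of a simple graph on `Fin n`, with entries in `R`. -/
noncomputable def adjMat {n : ℕ} (R : Type*) [Zero R] [One R] (G : SimpleGraph (Fin n)) :
    Matrix (Fin n) (Fin n) R :=
  Matrix.of fun i j => if G.Adj i j then 1 else 0

/-- The walk matrix `W = [e, Ae, A²e, …, A^{n−1}e]` of a square matrix `A`,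
where `e` is the all-ones vector: the `j`-th column is `A^j e`. -/
noncomputable def walkMatrix {R : Type*} [CommRing R] {n : ℕ} (A : Matrix (Fin n) (Fin n) R) :
    Matrix (Fin n) (Fin n) R :=
  Matrix.of fun i j => (A ^ (j : ℕ) *ᵥ fun _ => 1) i

/-- **Lemma 3.6.** If `rank_p W = n − 1`, then
`rank_p (A − λ₀I) ≥ n − 2`. -/
theorem stmt_9 {n : ℕ} (G : SimpleGraph (Fin n))
    (A : Matrix (Fin n) (Fin n) ℤ) (hA : A = adjMat ℤ G)
    (W : Matrix (Fin n) (Fin n) ℤ) (hW : W = walkMatrix A)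
    (p : ℕ) (hp : p.Prime) (lam : ℤ)
    (hrank : (W.map (Int.cast : ℤ → ZMod p)).rank = n - 1) :
    n - 2 ≤ ((A - lam • (1 : Matrix (Fin n) (Fin n) ℤ)).map (Int.cast : ℤ → ZMod p)).rank := by
  haveI : Fact p.Prime := ⟨hp⟩
  set K := ZMod p with hK
  set A' : Matrix (Fin n) (Fin n) K := A.map Int.cast with hA'
  set W' : Matrix (Fin n) (Fin n) K := W.map Int.cast with hW'
  set e : Fin n → K := fun _ => 1 with he
  set B : Matrix (Fin n) (Fin n) K := (A - lam • 1).map Int.cast with hB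
  have hBsub : B = A' - (lam : K) • 1 := by
    ext i j
    simp only [hB, hA', Matrix.map_apply, Matrix.sub_apply, Matrix.smul_apply,
      Matrix.one_apply, smul_eq_mul]
    push_cast
    split_ifs <;> simp
  -- A' is symmetric
  have hAsymm : A'ᵀ = A' := by
    ext i j
    simp only [hA', hA, adjMat, Matrix.transpose_apply, Matrix.map_apply, Matrix.of_apply]
    rw [SimpleGraph.adj_comm]
  have hApowsymm : ∀ j : ℕ, (A' ^ j)ᵀ = A' ^ j := fun j => by
    rw [Matrix.transpose_pow, hAsymm]
  -- columns of W'
  have hApow : ∀ j : ℕ, (A ^ j).map (Int.cast : ℤ → K) = A' ^ j := fun j => by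
    have := map_pow ((Int.castRingHom K).mapMatrix) A j
    simpa [RingHom.mapMatrix_apply, hA'] using this
  have hWcol : ∀ j : Fin n, (fun i => W' i j) = (A' ^ (j : ℕ)) *ᵥ e := by
    intro j
    funext i
    rw [← hApow]
    simp only [hW', hW, walkMatrix, Matrix.map_apply, Matrix.of_apply, Matrix.mulVec,
      dotProduct, Matrix.map_apply]
    push_cast
    simp [he]
    exact Int.cast_sum (R := ZMod p) _ _
  -- kernel membership facts
  have hkerB : ∀ v, B *ᵥ v = 0 → A' *ᵥ v = (lam : K) • v := by
    intro v hv
    rw [hBsub, Matrix.sub_mulVec, Matrix.smul_mulVec, Matrix.one_mulVec,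
      sub_eq_zero] at hv
    exact hv
  have hkerBpow : ∀ v, B *ᵥ v = 0 → ∀ j : ℕ, (A' ^ j) *ᵥ v = ((lam : K) ^ j) • v := by
    intro v hv j
    induction j with
    | zero => simp
    | succ k ih =>
      rw [pow_succ, ← Matrix.mulVec_mulVec, hkerB v hv, Matrix.mulVec_smul, ih,
        smul_smul, pow_succ, mul_comm]
  -- if v ∈ ker B and e ⬝ᵥ v = 0 then W'ᵀ *ᵥ v = 0
  have hkey : ∀ v, B *ᵥ v = 0 → e ⬝ᵥ v = 0 → W'ᵀ *ᵥ v = 0 := by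
    intro v hv hev
    funext j
    have : (W'ᵀ *ᵥ v) j = (fun i => W' i j) ⬝ᵥ v := by
      simp [Matrix.mulVec, dotProduct, Matrix.transpose_apply]
    rw [this, hWcol j]
    rw [dotProduct_comm, Matrix.dotProduct_mulVec, ← Matrix.mulVec_transpose,
      hApowsymm, hkerBpow v hv]
    simp only [smul_dotProduct, Pi.zero_apply]
    rw [dotProduct_comm] at hev
    rw [hev, smul_zero]
  -- rank-nullity and kernel dimensions
  have hrn : ∀ M : Matrix (Fin n) (Fin n) K,
      M.rank + Module.finrank K (LinearMap.ker M.mulVecLin) = n := by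
    intro M
    rw [Matrix.rank, LinearMap.finrank_range_add_finrank_ker]
    simp
  have hWt : (W'ᵀ).rank = n - 1 := by rw [Matrix.rank_transpose]; exact hrank
  have hkerWt : Module.finrank K (LinearMap.ker (W'ᵀ).mulVecLin) ≤ 1 := by
    have h1 := hrn W'ᵀ
    have h2 : W'.rank ≤ n := Matrix.rank_le_card_width W' |>.trans (by simp)
    omega
  -- ker B ≤ ker W'ᵀ ⊔ span {u} (or ≤ ker W'ᵀ)
  have hkerB2 : Module.finrank K (LinearMap.ker B.mulVecLin) ≤ 2 := by
    by_cases hcase : ∀ v ∈ LinearMap.ker B.mulVecLin, e ⬝ᵥ v = 0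
    · have hle : LinearMap.ker B.mulVecLin ≤ LinearMap.ker (W'ᵀ).mulVecLin := by
        intro v hv
        simp only [LinearMap.mem_ker, Matrix.mulVecLin_apply] at hv ⊢
        exact hkey v hv (hcase v (by simpa [LinearMap.mem_ker] using hv))
      calc Module.finrank K (LinearMap.ker B.mulVecLin)
          ≤ Module.finrank K (LinearMap.ker (W'ᵀ).mulVecLin) :=
            Submodule.finrank_mono hle
        _ ≤ 2 := hkerWt.trans (by norm_num)
    · push_neg at hcase
      obtain ⟨u, hu, heu⟩ := hcase
      have hle : LinearMap.ker B.mulVecLin ≤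
          LinearMap.ker (W'ᵀ).mulVecLin ⊔ Submodule.span K {u} := by
        intro v hv
        simp only [LinearMap.mem_ker, Matrix.mulVecLin_apply] at hv hu
        set c : K := (e ⬝ᵥ v) / (e ⬝ᵥ u) with hc
        have hmem : v - c • u ∈ LinearMap.ker (W'ᵀ).mulVecLin := by
          simp only [LinearMap.mem_ker, Matrix.mulVecLin_apply]
          apply hkey
          · rw [Matrix.mulVec_sub, Matrix.mulVec_smul, hv, hu, smul_zero, sub_zero]
          · rw [dotProduct_sub, dotProduct_smul, smul_eq_mul, hc,
              div_mul_cancel₀ _ heu, sub_self]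
        have : v = (v - c • u) + c • u := by abel
        rw [this]
        exact Submodule.add_mem_sup hmem (Submodule.smul_mem _ _ (Submodule.mem_span_singleton_self u))
      calc Module.finrank K (LinearMap.ker B.mulVecLin)
          ≤ Module.finrank K ↥(LinearMap.ker (W'ᵀ).mulVecLin ⊔ Submodule.span K {u}) :=
            Submodule.finrank_mono hle
        _ ≤ Module.finrank K (LinearMap.ker (W'ᵀ).mulVecLin)
              + Module.finrank K (Submodule.span K {u}) :=
            Submodule.finrank_add_le_finrank_add_finrank _ _
        _ ≤ 1 + 1 := add_le_add hkerWt (by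
            have hu0 : u ≠ 0 := fun h => heu (by simp [h])
            rw [finrank_span_singleton hu0])
        _ = 2 := by norm_num
  have := hrn B
  omega
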